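/- Let (ℋ, μ) be a linear classification problem with hard core 𝒞, and suppose there exists λ̄ ∈ ℝⁿ with y(Hλ̄)(x) = 0 for all sampled points in 𝒞 and y(Hλ̄)(x) > 0 for all sampled points in 𝒞^c (as holds with probability 1 for a finite i.i.d. sample). Then inf over λ ∈ ℝⁿ of the full empirical risk equals the inf over λ of the empirical risk restricted to 𝒞: inf_λ R^m_φ(Hλ) = inf_λ R^m_{φ;𝒞}(Hλ), for any φ ∈ Φ. -/

import Mathlib

open MeasureTheory Filter Set

private lemma phi_mono (φ : ℝ → ℝ) (hconv : ConvexOn ℝ Set.univ φ)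
    (hlim : Tendsto φ atBot (nhds 0)) : Monotone φ := by
  intro a b hab
  rcases eq_or_lt_of_le hab with rfl | hab
  · exact le_rfl
  have hbz' : Tendsto (fun z : ℝ => b - z) atBot atTop := by
    have := tendsto_atTop_add_const_left atBot b
      (tendsto_neg_atBot_atTop : Tendsto (fun z : ℝ => -z) atBot atTop)
    simpa [sub_eq_add_neg] using this
  have h1 : Tendsto (fun z : ℝ => (b - a) / (b - z)) atBot (nhds 0) := by
    have := (tendsto_inv_atTop_zero.comp hbz').const_mul (b - a)
    simpa [div_eq_mul_inv, Function.comp] using this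
  have h2 : Tendsto (fun z : ℝ => (a - z) / (b - z)) atBot (nhds 1) := by
    have heq : ∀ᶠ z in atBot, 1 - (b - a) / (b - z) = (a - z) / (b - z) := by
      filter_upwards [eventually_lt_atBot b] with z hz
      have hne : b - z ≠ 0 := sub_ne_zero.mpr (ne_of_gt hz)
      field_simp
      ring
    have := (tendsto_const_nhds : Tendsto (fun _ : ℝ => (1:ℝ)) atBot (nhds 1)).sub h1
    simpa using this.congr' heq
  have hRHS : Tendsto (fun z : ℝ => (b - a) / (b - z) * φ z + (a - z) / (b - z) * φ b)
      atBot (nhds (φ b)) := by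
    have := (h1.mul hlim).add (h2.mul (tendsto_const_nhds : Tendsto (fun _ : ℝ => φ b) atBot _))
    simpa using this
  refine ge_of_tendsto hRHS ?_
  filter_upwards [eventually_lt_atBot a] with z hz
  have hbz : (0:ℝ) < b - z := by linarith
  have hs : (0:ℝ) ≤ (b - a) / (b - z) := div_nonneg (by linarith) hbz.le
  have ht : (0:ℝ) ≤ (a - z) / (b - z) := div_nonneg (by linarith) hbz.le
  have hsum : (b - a) / (b - z) + (a - z) / (b - z) = 1 := by
    field_simp
    ring
  have hcomb : (b - a) / (b - z) * z + (a - z) / (b - z) * b = a := by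
    field_simp
    ring
  have := hconv.2 (Set.mem_univ z) (Set.mem_univ b) hs ht hsum
  simpa [smul_eq_mul, hcomb] using this

private lemma phi_nonneg (φ : ℝ → ℝ) (hconv : ConvexOn ℝ Set.univ φ)
    (hlim : Tendsto φ atBot (nhds 0)) : ∀ t, 0 ≤ φ t := by
  intro t
  refine le_of_tendsto hlim ?_
  filter_upwards [eventually_le_atBot t] with z hz
  exact phi_mono φ hconv hlim hz

theorem empirical_risk_inf_eq_hard_core_inf
    {X : Type*} [MeasurableSpace X]
    (n : ℕ) (h : Fin n → X → ℝ)
    (hbd : ∀ i x, |h i x| ≤ 1)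
    (C : Set (X × ℝ))
    (φ : ℝ → ℝ) (hconv : ConvexOn ℝ Set.univ φ) (h0 : 0 < φ 0)
    (hlim : Filter.Tendsto φ Filter.atBot (nhds 0))
    (m : ℕ) (x : Fin m → X) (y : Fin m → ℝ)
    (hy : ∀ i, y i = 1 ∨ y i = -1)
    (lb : Fin n → ℝ)
    (hlbC : ∀ i, (x i, y i) ∈ C → y i * (∑ j, lb j * h j (x i)) = 0)
    (hlbCc : ∀ i, (x i, y i) ∉ C → 0 < y i * (∑ j, lb j * h j (x i))) :
    (⨅ lam : Fin n → ℝ,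
        (∑ i, φ (-(y i * ∑ j, lam j * h j (x i)))) / m)
      = ⨅ lam : Fin n → ℝ,
        (∑ i, C.indicator (fun _ => φ (-(y i * ∑ j, lam j * h j (x i)))) (x i, y i)) / m := by
  have hnn := phi_nonneg φ hconv hlim
  set F : (Fin n → ℝ) → ℝ := fun lam => (∑ i, φ (-(y i * ∑ j, lam j * h j (x i)))) / m with hF
  set G : (Fin n → ℝ) → ℝ := fun lam =>
    (∑ i, C.indicator (fun _ => φ (-(y i * ∑ j, lam j * h j (x i)))) (x i, y i)) / m with hG
  have hFnn : ∀ lam, 0 ≤ F lam := fun lam =>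
    div_nonneg (Finset.sum_nonneg fun i _ => hnn _) (Nat.cast_nonneg m)
  have hGnn : ∀ lam, 0 ≤ G lam := fun lam =>
    div_nonneg (Finset.sum_nonneg fun i _ => Set.indicator_nonneg (fun _ _ => hnn _) _)
      (Nat.cast_nonneg m)
  have hbF : BddBelow (Set.range F) := ⟨0, fun v ⟨lam, hl⟩ => hl ▸ hFnn lam⟩
  have hbG : BddBelow (Set.range G) := ⟨0, fun v ⟨lam, hl⟩ => hl ▸ hGnn lam⟩
  apply le_antisymm
  · -- ⨅ F ≤ ⨅ G
    refine le_ciInf fun lam => ?_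
    have hT : Tendsto (fun t : ℝ => F (fun j => lam j + t * lb j)) atTop (nhds (G lam)) := by
      apply Tendsto.div_const
      apply tendsto_finset_sum
      intro i _
      have hsum : ∀ t : ℝ, (∑ j, (lam j + t * lb j) * h j (x i))
          = (∑ j, lam j * h j (x i)) + t * ∑ j, lb j * h j (x i) := by
        intro t
        rw [Finset.mul_sum, ← Finset.sum_add_distrib]
        congr 1; ext j; ring
      by_cases hiC : (x i, y i) ∈ C
      · have hz := hlbC i hiC
        have : ∀ t : ℝ, φ (-(y i * ∑ j, (lam j + t * lb j) * h j (x i)))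
            = C.indicator (fun _ => φ (-(y i * ∑ j, lam j * h j (x i)))) (x i, y i) := by
          intro t
          rw [Set.indicator_of_mem hiC, hsum t]
          have h2 : y i * ((∑ j, lam j * h j (x i)) + t * ∑ j, lb j * h j (x i))
              = y i * ∑ j, lam j * h j (x i) := by
            rw [mul_add, mul_left_comm, hz, mul_zero, add_zero]
          rw [h2]
        simp only [this]
        exact tendsto_const_nhds
      · rw [Set.indicator_of_notMem hiC]
        have hc := hlbCc i hiC
        have harg : Tendsto (fun t : ℝ => -(y i * ∑ j, (lam j + t * lb j) * h j (x i)))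
            atTop atBot := by
          have : Tendsto (fun t : ℝ =>
              -(y i * ∑ j, lam j * h j (x i)) - t * (y i * ∑ j, lb j * h j (x i)))
              atTop atBot := by
            have h3 : Tendsto (fun t : ℝ => t * (y i * ∑ j, lb j * h j (x i))) atTop atTop :=
              tendsto_id.atTop_mul_const hc
            have h4 : Tendsto (fun t : ℝ => -(t * (y i * ∑ j, lb j * h j (x i))))
                atTop atBot := tendsto_neg_atTop_atBot.comp h3
            have h5 := tendsto_atBot_add_const_left atTop
              (-(y i * ∑ j, lam j * h j (x i))) h4
            simpa [sub_eq_add_neg] using h5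
          refine this.congr fun t => ?_
          rw [hsum t]
          ring
        exact hlim.comp harg
      done
    refine ge_of_tendsto hT ?_
    filter_upwards with t
    exact ciInf_le hbF _
  · refine ciInf_mono hbG fun lam => ?_
    have : (∑ i, C.indicator (fun _ => φ (-(y i * ∑ j, lam j * h j (x i)))) (x i, y i))
        ≤ ∑ i, φ (-(y i * ∑ j, lam j * h j (x i))) := by
      refine Finset.sum_le_sum fun i _ => ?_
      exact Set.indicator_apply_le' (fun _ => le_rfl) (fun _ => hnn _)
    show (∑ i, C.indicator (fun _ => φ (-(y i * ∑ j, lam j * h j (x i)))) (x i, y i)) / m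
        ≤ (∑ i, φ (-(y i * ∑ j, lam j * h j (x i)))) / m
    gcongr
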